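/- Let D be a graph database, A an automaton, and w a walk in D that is the projection of some run in D×A. Then w admits a decomposition w = u_1 v_1 u_2 v_2 ⋯ v_n u_{n+1}, where each u_i is a (possibly trivial) closed walk (src(u_i) = tgt(u_i)), and the concatenation v_1 v_2 ⋯ v_n is the projection of a simple run of D×A (i.e., a run that repeats no vertex of D×A). -/

import Mathlib

structure GraphDB (σ V E : Type) where
  src : E → V
  tgt : E → V
  lbl : E → Set σ

inductive GraphDB.IsWalkFrom {σ V E : Type} (D : GraphDB σ V E) : V → List E → V → Prop
  | nil (v : V) : D.IsWalkFrom v [] v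
  | cons {v u t : V} {e : E} {es : List E} :
      D.src e = v → D.tgt e = u → D.IsWalkFrom u es t → D.IsWalkFrom v (e :: es) t

/-- The list of vertices visited by a walk starting at `s` with edge list `es`. -/
def GraphDB.walkVertices {σ V E : Type} (D : GraphDB σ V E) (s : V) (es : List E) : List V :=
  s :: es.map D.tgt

/-- `w` is one of the label words of the walk with edges `es`. -/
def GraphDB.WalkLabel {σ V E : Type} (D : GraphDB σ V E) (es : List E) (w : List σ) : Prop :=
  List.Forall₂ (fun a e => a ∈ D.lbl e) w es

structure Auto (σ Q : Type) where
  Δ : Set (Q × σ × Q)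
  I : Set Q
  F : Set Q

inductive Auto.IsComp {σ Q : Type} (A : Auto σ Q) : Q → List σ → Q → Prop
  | nil (q : Q) : A.IsComp q [] q
  | cons {q q' t : Q} {a : σ} {w : List σ} :
      (q, a, q') ∈ A.Δ → A.IsComp q' w t → A.IsComp q (a :: w) t

def Auto.Accepts {σ Q : Type} (A : Auto σ Q) (w : List σ) : Prop :=
  ∃ i ∈ A.I, ∃ f ∈ A.F, A.IsComp i w f

/-- Edges of the product (run) database `D × A`. -/
def ProdEdge {σ V E Q : Type} (D : GraphDB σ V E) (A : Auto σ Q) : Type :=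
  { p : E × (Q × σ × Q) // p.2 ∈ A.Δ ∧ p.2.2.1 ∈ D.lbl p.1 }

/-- The product (run) database `D × A`. -/
def prodDB {σ V E Q : Type} (D : GraphDB σ V E) (A : Auto σ Q) :
    GraphDB σ (V × Q) (ProdEdge D A) where
  src p := (D.src p.1.1, p.1.2.1)
  tgt p := (D.tgt p.1.1, p.1.2.2.2)
  lbl p := {p.1.2.2.1}

/-- A run: a walk of `D × A` from `V × I` to `V × F`. -/
def IsRun {σ V E Q : Type} (D : GraphDB σ V E) (A : Auto σ Q)
    (p : V × Q) (es : List (ProdEdge D A)) (q : V × Q) : Prop :=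
  (prodDB D A).IsWalkFrom p es q ∧ p.2 ∈ A.I ∧ q.2 ∈ A.F

/-- A walk is simple if it repeats no vertex. -/
def IsSimple {σ V E : Type} (D : GraphDB σ V E) (s : V) (es : List E) : Prop :=
  (D.walkVertices s es).Nodup

/-- Projection of product edges to edges of `D`. -/
def projEdges {σ V E Q : Type} {D : GraphDB σ V E} {A : Auto σ Q}
    (es : List (ProdEdge D A)) : List E := es.map (fun p => p.1.1)

/-- Membership in the simple-run semantics `⟦A⟧_SR(D)`:
the walk `(s, es, t)` is the projection of some simple run of `D × A`. -/
def InSR {σ V E Q : Type} (D : GraphDB σ V E) (A : Auto σ Q)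
    (s : V) (es : List E) (t : V) : Prop :=
  ∃ (i f : Q) (r : List (ProdEdge D A)),
    IsRun D A (s, i) r (t, f) ∧ IsSimple (prodDB D A) (s, i) r ∧ projEdges r = es


section Helpers
variable {σ V E Q : Type} {D : GraphDB σ V E} {A : Auto σ Q}

lemma ofFn_cons' {α : Type} {n : ℕ} (x : α) (f : Fin n → α) :
    List.ofFn (Fin.cons x f : Fin (n + 1) → α) = x :: List.ofFn f := by
  rw [List.ofFn_succ]
  simp [Fin.cons_succ]

lemma ofFn_block_cons {α : Type} {n : ℕ} (cu cv : α) (u : Fin (n + 1) → α) (v : Fin n → α)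
    (op : α → α → α) :
    (List.ofFn fun i : Fin (n + 1) =>
        op ((Fin.cons cu u : Fin (n + 2) → α) i.castSucc) ((Fin.cons cv v : Fin (n + 1) → α) i))
    = op cu cv :: List.ofFn (fun i : Fin n => op (u i.castSucc) (v i)) := by
  rw [List.ofFn_succ]
  congr 1

lemma cons_last {α : Type} {n : ℕ} (x : α) (f : Fin (n + 1) → α) :
    (Fin.cons x f : Fin (n + 2) → α) (Fin.last (n + 1)) = f (Fin.last n) := by
  rw [← Fin.succ_last, Fin.cons_succ]

lemma GraphDB.IsWalkFrom.append' {x y z : V}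
    {l1 l2 : List E} (h1 : D.IsWalkFrom x l1 y) (h2 : D.IsWalkFrom y l2 z) :
    D.IsWalkFrom x (l1 ++ l2) z := by
  induction h1 with
  | nil => simpa
  | cons hs ht _ ih => exact .cons hs ht (ih h2)

lemma proj_walk {p q : V × Q} {r : List (ProdEdge D A)}
    (h : (prodDB D A).IsWalkFrom p r q) :
    D.IsWalkFrom p.1 (projEdges r) q.1 := by
  induction h with
  | nil => exact .nil _
  | cons hs ht _ ih =>
    exact .cons (congrArg Prod.fst hs) (congrArg Prod.fst ht) ih

/-- Split off the first return to `p`. -/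
lemma split_first {q p : V × Q} : ∀ {r : List (ProdEdge D A)} {x : V × Q},
    (prodDB D A).IsWalkFrom x r q → p ∈ r.map (prodDB D A).tgt →
    ∃ c r2, r = c ++ r2 ∧ c ≠ [] ∧ (prodDB D A).IsWalkFrom x c p ∧
      (prodDB D A).IsWalkFrom p r2 q := by
  intro r
  induction r with
  | nil => intro x hw hp; simp at hp
  | cons e es ihr =>
    intro x hw hp
    cases hw with
    | cons hs ht hw3 =>
      subst ht
      by_cases he : (prodDB D A).tgt e = p
      · exact ⟨[e], es, rfl, by simp, .cons hs he (he ▸ GraphDB.IsWalkFrom.nil _),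
          he ▸ hw3⟩
      · have hp' : p ∈ es.map (prodDB D A).tgt := by
          simp only [List.map_cons, List.mem_cons] at hp
          tauto
        obtain ⟨c, r2, hr, hc, hwc, hw2⟩ := ihr hw3 hp'
        exact ⟨e :: c, r2, by simp [hr], by simp, .cons hs rfl hwc, hw2⟩

lemma main_lemma (N : ℕ) : ∀ (r : List (ProdEdge D A)), r.length ≤ N →
    ∀ (p q : V × Q), (prodDB D A).IsWalkFrom p r q →
    ∃ (n : ℕ) (u : Fin (n + 1) → List E) (v : Fin n → List E) (a : Fin (n + 1) → V)
      (vs : List (ProdEdge D A)),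
      projEdges r = (List.ofFn (fun i : Fin n => u i.castSucc ++ v i)).flatten ++ u (Fin.last n) ∧
      (∀ i, D.IsWalkFrom (a i) (u i) (a i)) ∧
      (prodDB D A).IsWalkFrom p vs q ∧
      IsSimple (prodDB D A) p vs ∧
      projEdges vs = (List.ofFn v).flatten ∧
      (∀ x ∈ (prodDB D A).walkVertices p vs, x ∈ (prodDB D A).walkVertices p r) := by
  induction N with
  | zero =>
    intro r hr p q hw
    have : r = [] := List.length_eq_zero_iff.mp (Nat.le_zero.mp hr)
    subst this
    cases hw
    exact ⟨0, fun _ => [], Fin.elim0, fun _ => p.1, [],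
      by simp [projEdges], fun i => .nil _, .nil _,
      List.nodup_singleton _, by simp [projEdges], fun x hx => hx⟩
  | succ N ih =>
    intro r hr p q hw
    by_cases hp : p ∈ r.map (prodDB D A).tgt
    · -- split off a closed walk at p
      obtain ⟨c, r2, hreq, hcne, hwc, hw2⟩ := split_first hw hp
      have hlen : r2.length ≤ N := by
        have := hr
        subst hreq
        simp only [List.length_append] at this
        have hc1 : 1 ≤ c.length := by
          cases c with
          | nil => exact absurd rfl hcne
          | cons _ _ => simp
        omega
      obtain ⟨n, u, v, a, vs, hdec, hcl, hwvs, hsimp, hpvs, hsub⟩ := ih r2 hlen p q hw2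
      refine ⟨n + 1, Fin.cons (projEdges c) u, Fin.cons [] v, Fin.cons p.1 a, vs, ?_, ?_,
        hwvs, hsimp, ?_, ?_⟩
      · subst hreq
        rw [ofFn_block_cons (projEdges c) [] u v (· ++ ·), cons_last]
        simp only [List.flatten_cons]
        simp only [projEdges, List.map_append] at hdec ⊢
        rw [hdec]
        simp
      · intro i
        refine Fin.cases ?_ ?_ i
        · simpa using proj_walk hwc
        · intro j
          rw [Fin.cons_succ, Fin.cons_succ]
          exact hcl j
      · rw [ofFn_cons']
        simp only [List.flatten_cons, List.nil_append]
        exact hpvs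
      · intro x hx
        have := hsub x hx
        subst hreq
        simp only [GraphDB.walkVertices, List.map_append, List.mem_cons, List.mem_append] at this ⊢
        tauto
    · -- p not revisited
      cases hw with
      | nil =>
        exact ⟨0, fun _ => [], Fin.elim0, fun _ => p.1, [],
          by simp [projEdges], fun i => .nil _, .nil _,
          List.nodup_singleton _, by simp [projEdges], fun x hx => hx⟩
      | @cons _ m _ e r3 hs ht hw3 =>
        have hlen : r3.length ≤ N := by simpa using hr
        obtain ⟨n, u, v, a, vs, hdec, hcl, hwvs, hsimp, hpvs, hsub⟩ := ih r3 hlen m q hw3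
        refine ⟨n + 1, Fin.cons [] u, Fin.cons [e.1.1] v, Fin.cons p.1 a, e :: vs, ?_, ?_,
          .cons hs ht hwvs, ?_, ?_, ?_⟩
        · rw [ofFn_block_cons [] [e.1.1] u v (· ++ ·), cons_last]
          simp only [List.flatten_cons]
          simp only [projEdges, List.map_cons] at hdec ⊢
          rw [hdec]
          simp
        · intro i
          refine Fin.cases ?_ ?_ i
          · exact .nil _
          · intro j
            rw [Fin.cons_succ, Fin.cons_succ]
            exact hcl j
        · -- simplicity
          have hv : (prodDB D A).walkVertices p (e :: vs)
              = p :: (prodDB D A).walkVertices m vs := by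
            simp [GraphDB.walkVertices, ht]
          rw [IsSimple, hv, List.nodup_cons]
          refine ⟨fun hmem => ?_, hsimp⟩
          have := hsub p hmem
          apply hp
          simp only [GraphDB.walkVertices, List.mem_cons] at this
          rcases this with h | h
          · rw [List.map_cons, ht]
            simp [h]
          · simp only [List.map_cons]
            exact List.mem_cons_of_mem _ h
        · rw [ofFn_cons']
          simp only [List.flatten_cons]
          simp only [projEdges, List.map_cons] at hpvs ⊢
          rw [hpvs]
          simp
        · intro x hx
          simp only [GraphDB.walkVertices, List.map_cons, List.mem_cons] at hx ⊢
          rcases hx with h | h | h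
          · tauto
          · tauto
          · have hx' : x ∈ (prodDB D A).walkVertices m vs := by
              simp [GraphDB.walkVertices, h]
            have := hsub x hx'
            simp only [GraphDB.walkVertices, List.mem_cons] at this
            rcases this with h' | h'
            · exact Or.inr (Or.inl (h'.trans ht.symm))
            · tauto

end Helpers
/-- a matched walk decomposes as `u₁ v₁ u₂ ⋯ vₙ u_{n+1}` with the `uᵢ`
closed walks and `v₁ ⋯ vₙ` the projection of a simple run. -/
theorem stmt_1 {σ V E Q : Type} (D : GraphDB σ V E) (A : Auto σ Q)
    (s t : V) (es : List E) (hw : D.IsWalkFrom s es t)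
    (hr : ∃ (i f : Q) (r : List (ProdEdge D A)),
        IsRun D A (s, i) r (t, f) ∧ projEdges r = es) :
    ∃ (n : ℕ) (u : Fin (n + 1) → List E) (v : Fin n → List E) (a : Fin (n + 1) → V),
      es = (List.ofFn (fun i : Fin n => u i.castSucc ++ v i)).flatten ++ u (Fin.last n) ∧
      (∀ i, D.IsWalkFrom (a i) (u i) (a i)) ∧
      D.IsWalkFrom s (List.ofFn v).flatten t ∧
      InSR D A s (List.ofFn v).flatten t := by
  obtain ⟨i, f, r, ⟨hwr, hi, hf⟩, hproj⟩ := hr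
  obtain ⟨n, u, v, a, vs, hdec, hcl, hwvs, hsimp, hpvs, -⟩ :=
    main_lemma r.length r le_rfl (s, i) (t, f) hwr
  refine ⟨n, u, v, a, ?_, hcl, ?_, i, f, vs, ⟨hwvs, hi, hf⟩, hsimp, hpvs⟩
  · rw [← hproj, hdec]
  · have h := proj_walk hwvs
    rw [hpvs] at h
    exact h
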